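/- Let s ∈ (1/2, 1), λ > 0, and p > d/2. There exists c = c(s) ∈ (0,1) and C = C(s,p) such that for all f, g with finite norms, ‖fg‖_{G^{λ;s}} ≤ C (‖f‖_{G^{λ;s}} ‖⟨∇⟩^p g‖_{G^{cλ;s}} + ‖g‖_{G^{λ;s}} ‖⟨∇⟩^p f‖_{G^{cλ;s}}), where ‖h‖_{G^{λ;s}}² = ∑_k ∫ |ĥ(k,η)|² e^{2λ|k,η|^s} dη on 𝕋 × ℝ (or the analogous definition on ℝᵈ). -/

import Mathlib

open MeasureTheory SchwartzMap Real
open scoped FourierTransform ENNReal InnerProductSpace RealInnerProductSpace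

section GevreyAux

lemma gevrey_rpow_add_le {s : ℝ} (hs0 : 0 < s) (hs1 : s ≤ 1) {a b : ℝ}
    (hb : 0 ≤ b) (hba : b ≤ a) : (a + b) ^ s ≤ a ^ s + s * b ^ s := by
  rcases eq_or_lt_of_le hb with hb0 | hb0
  · simp [← hb0, Real.zero_rpow hs0.ne']
  have ha0 : 0 < a := lt_of_lt_of_le hb0 hba
  have h1 : (a + b) ^ s = a ^ s * (1 + b / a) ^ s := by
    rw [← Real.mul_rpow (le_of_lt ha0) (by linarith [div_nonneg hb ha0.le])]
    rw [mul_add, mul_one, mul_div_cancel₀ _ (ne_of_gt ha0)]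
  have h2 : (1 + b / a) ^ s ≤ 1 + s * (b / a) :=
    rpow_one_add_le_one_add_mul_self (by linarith [div_nonneg hb ha0.le]) (le_of_lt hs0) hs1
  have h3 : a ^ s * (1 + s * (b / a)) = a ^ s + s * (a ^ (s - 1) * b) := by
    rw [Real.rpow_sub ha0, Real.rpow_one]; field_simp
  have h4 : a ^ (s - 1) ≤ b ^ (s - 1) :=
    antitoneOn_rpow_Ioi_of_exponent_nonpos (by linarith) (Set.mem_Ioi.2 hb0)
      (Set.mem_Ioi.2 ha0) hba
  have h5 : a ^ (s - 1) * b ≤ b ^ s := by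
    calc a ^ (s - 1) * b ≤ b ^ (s - 1) * b := by
          exact mul_le_mul_of_nonneg_right h4 hb
      _ = b ^ s := by
          rw [← Real.rpow_add_one hb0.ne']; norm_num
  calc (a + b) ^ s ≤ a ^ s * (1 + s * (b / a)) := by
        rw [h1]; exact mul_le_mul_of_nonneg_left h2 (by positivity)
    _ = a ^ s + s * (a ^ (s - 1) * b) := h3
    _ ≤ a ^ s + s * b ^ s := by nlinarith

lemma gevrey_fourier_mul {d : ℕ} (f g : 𝓢(EuclideanSpace ℝ (Fin d), ℂ))
    (ξ : EuclideanSpace ℝ (Fin d)) :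
    𝓕 (fun x => f x * g x) ξ = ∫ η, 𝓕 (⇑f) (ξ - η) * 𝓕 (⇑g) η := by
  have hgi : Integrable (𝓕 ⇑g) := by
    exact (𝓕 g).integrable
  have hginv : ∀ x : EuclideanSpace ℝ (Fin d), (∫ η, (Real.fourierChar ⟪η, x⟫ : ℂ) * 𝓕 (⇑g) η) = g x := by
    intro x
    have h := g.continuous.fourierInv_fourier_eq g.integrable hgi
    have h2 : 𝓕⁻ (𝓕 ⇑g) x = g x := by rw [h]
    rw [Real.fourierInv_eq] at h2
    simpa [Circle.smul_def] using h2
  have hmeasF : Continuous (𝓕 ⇑f) := by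
    exact (𝓕 f).continuous
  -- the integrand for Fubini
  have hint : Integrable (fun q : EuclideanSpace ℝ (Fin d) × EuclideanSpace ℝ (Fin d) =>
      (Real.fourierChar (-⟪q.1, ξ⟫) : ℂ) * ((Real.fourierChar ⟪q.2, q.1⟫ : ℂ)
        * (f q.1 * 𝓕 (⇑g) q.2))) (volume.prod volume) := by
    have hbase : Integrable (fun q : EuclideanSpace ℝ (Fin d) × EuclideanSpace ℝ (Fin d) => f q.1 * 𝓕 (⇑g) q.2) (volume.prod volume) :=
      f.integrable.mul_prod hgi
    have heq : (fun q : EuclideanSpace ℝ (Fin d) × EuclideanSpace ℝ (Fin d) =>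
        (Real.fourierChar (-⟪q.1, ξ⟫) : ℂ) * ((Real.fourierChar ⟪q.2, q.1⟫ : ℂ)
          * (f q.1 * 𝓕 (⇑g) q.2)))
        = fun q => ((Real.fourierChar (-⟪q.1, ξ⟫) : ℂ) * (Real.fourierChar ⟪q.2, q.1⟫ : ℂ))
          * (f q.1 * 𝓕 (⇑g) q.2) := by
      funext q; ring
    rw [heq]
    apply hbase.bdd_mul (c := 1)
    · apply Continuous.aestronglyMeasurable
      have hc : Continuous ((↑) : Circle → ℂ) := continuous_subtype_val
      apply Continuous.mul
      · exact hc.comp (Real.continuous_fourierChar.comp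
          (continuous_inner.comp (continuous_fst.prodMk continuous_const)).neg)
      · exact hc.comp (Real.continuous_fourierChar.comp
          (continuous_inner.comp (continuous_snd.prodMk continuous_fst)))
    · refine Filter.Eventually.of_forall (fun q => ?_)
      rw [norm_mul]
      exact mul_le_one₀ (Circle.norm_coe _).le (norm_nonneg _) (Circle.norm_coe _).le
  calc 𝓕 (fun x => f x * g x) ξ
      = ∫ x, (Real.fourierChar (-⟪x, ξ⟫) : ℂ) * (f x * g x) := by
        rw [Real.fourier_eq]; simp [Circle.smul_def]
    _ = ∫ x, ∫ η, (Real.fourierChar (-⟪x, ξ⟫) : ℂ) *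
          ((Real.fourierChar ⟪η, x⟫ : ℂ) * (f x * 𝓕 (⇑g) η)) := by
        congr 1; ext x
        rw [← hginv x]
        rw [← integral_const_mul, ← integral_const_mul]
        congr 1; ext η; ring
    _ = ∫ η, ∫ x, (Real.fourierChar (-⟪x, ξ⟫) : ℂ) *
          ((Real.fourierChar ⟪η, x⟫ : ℂ) * (f x * 𝓕 (⇑g) η)) := by
        exact integral_integral_swap hint
    _ = ∫ η, (∫ x, Real.fourierChar (-⟪x, ξ - η⟫) • f x) * 𝓕 (⇑g) η := by
        congr 1; ext η
        rw [← integral_mul_const]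
        congr 1; ext x
        have hchar : (Real.fourierChar (-⟪x, ξ - η⟫) : ℂ)
            = (Real.fourierChar (-⟪x, ξ⟫) : ℂ) * (Real.fourierChar ⟪η, x⟫ : ℂ) := by
          rw [← Circle.coe_mul, ← AddChar.map_add_eq_mul]
          congr 2
          rw [inner_sub_right, real_inner_comm η x]
          ring
        rw [Circle.smul_def, hchar, smul_eq_mul]
        ring
    _ = ∫ η, 𝓕 (⇑f) (ξ - η) * 𝓕 (⇑g) η := by
        simp only [← Real.fourier_eq]

lemma gevrey_half_half (x : ℝ≥0∞) : x ^ ((1:ℝ)/2) * x ^ ((1:ℝ)/2) = x := by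
  rw [← ENNReal.rpow_add_of_nonneg _ _ (by norm_num) (by norm_num)]
  norm_num

lemma gevrey_cs {α : Type*} [MeasurableSpace α] (μ : Measure α) {u v : α → ℝ≥0∞}
    (hu : AEMeasurable u μ) (hv : AEMeasurable v μ) :
    (∫⁻ a, u a * v a ∂μ) ^ 2 ≤ (∫⁻ a, u a ^ 2 ∂μ) * ∫⁻ a, v a ^ 2 ∂μ := by
  have h22 : Real.HolderConjugate 2 2 := Real.HolderConjugate.two_two
  have h := ENNReal.lintegral_mul_le_Lp_mul_Lq μ h22 hu hv
  calc (∫⁻ a, u a * v a ∂μ) ^ 2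
      ≤ ((∫⁻ a, u a ^ (2:ℝ) ∂μ) ^ ((1:ℝ)/2) * (∫⁻ a, v a ^ (2:ℝ) ∂μ) ^ ((1:ℝ)/2)) ^ 2 := by
        exact pow_le_pow_left₀ (by positivity) h 2
    _ = (∫⁻ a, u a ^ 2 ∂μ) * ∫⁻ a, v a ^ 2 ∂μ := by
        rw [mul_pow, sq, sq, gevrey_half_half, gevrey_half_half]
        simp_rw [ENNReal.rpow_two]

lemma gevrey_young {d : ℕ} {F G : EuclideanSpace ℝ (Fin d) → ℝ≥0∞}
    (hF : Measurable F) (hG : Measurable G) :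
    ∫⁻ ξ, (∫⁻ η, F (ξ - η) * G η) ^ 2
      ≤ (∫⁻ η, G η) ^ 2 * ∫⁻ ξ, F ξ ^ 2 := by
  have hstep : ∀ ξ, (∫⁻ η, F (ξ - η) * G η) ^ 2
      ≤ (∫⁻ η, F (ξ - η) ^ 2 * G η) * ∫⁻ η, G η := by
    intro ξ
    have hu : AEMeasurable (fun η => F (ξ - η) * G η ^ ((1:ℝ)/2)) volume :=
      ((hF.comp (measurable_const.sub measurable_id)).mul
        (hG.pow_const _)).aemeasurable
    have hv : AEMeasurable (fun η => G η ^ ((1:ℝ)/2)) volume :=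
      (hG.pow_const _).aemeasurable
    have h := gevrey_cs volume hu hv
    have e1 : ∀ η : EuclideanSpace ℝ (Fin d),
        F (ξ - η) * G η ^ ((1:ℝ)/2) * G η ^ ((1:ℝ)/2) = F (ξ - η) * G η := by
      intro η; rw [mul_assoc, gevrey_half_half]
    have e2 : ∀ η : EuclideanSpace ℝ (Fin d),
        (F (ξ - η) * G η ^ ((1:ℝ)/2)) ^ 2 = F (ξ - η) ^ 2 * G η := by
      intro η; rw [mul_pow, sq (G η ^ ((1:ℝ)/2)), gevrey_half_half]
    have e3 : ∀ η : EuclideanSpace ℝ (Fin d), (G η ^ ((1:ℝ)/2)) ^ 2 = G η := by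
      intro η; rw [sq, gevrey_half_half]
    simp_rw [e1, e2, e3] at h
    exact h
  calc ∫⁻ ξ, (∫⁻ η, F (ξ - η) * G η) ^ 2
      ≤ ∫⁻ ξ, (∫⁻ η, F (ξ - η) ^ 2 * G η) * ∫⁻ η, G η := lintegral_mono hstep
    _ = (∫⁻ ξ, ∫⁻ η, F (ξ - η) ^ 2 * G η) * ∫⁻ η, G η := by
        apply lintegral_mul_const''
        apply Measurable.aemeasurable
        apply Measurable.lintegral_prod_right
        exact ((hF.comp (measurable_fst.sub measurable_snd)).pow_const 2).mul
          (hG.comp measurable_snd)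
    _ = (∫⁻ η, ∫⁻ ξ, F (ξ - η) ^ 2 * G η) * ∫⁻ η, G η := by
        congr 1
        apply lintegral_lintegral_swap
        exact (((hF.comp (measurable_fst.sub measurable_snd)).pow_const 2).mul
          (hG.comp measurable_snd)).aemeasurable
    _ = (∫⁻ η, (∫⁻ ξ, F (ξ - η) ^ 2) * G η) * ∫⁻ η, G η := by
        congr 1; apply lintegral_congr; intro η
        exact lintegral_mul_const _ ((hF.comp (measurable_id.sub measurable_const)).pow_const 2)
    _ = (∫⁻ η, (∫⁻ ξ, F ξ ^ 2) * G η) * ∫⁻ η, G η := by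
        congr 1; apply lintegral_congr; intro η
        congr 1
        exact lintegral_sub_right_eq_self (fun ξ => F ξ ^ 2) η
    _ = (∫⁻ η, G η) ^ 2 * ∫⁻ ξ, F ξ ^ 2 := by
        rw [lintegral_const_mul'' _ hG.aemeasurable]; ring

lemma gevrey_l1 {d : ℕ} {G : EuclideanSpace ℝ (Fin d) → ℝ≥0∞} (hG : Measurable G) (p : ℝ) :
    ∫⁻ η, G η ≤ (∫⁻ η : EuclideanSpace ℝ (Fin d),
        ENNReal.ofReal ((1 + ‖η‖) ^ (-(2*p)))) ^ ((1:ℝ)/2)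
      * (∫⁻ η, (ENNReal.ofReal ((1 + ‖η‖) ^ p) * G η) ^ 2) ^ ((1:ℝ)/2) := by
  have h22 : Real.HolderConjugate 2 2 := Real.HolderConjugate.two_two
  have hw : Measurable fun η : EuclideanSpace ℝ (Fin d) =>
      ENNReal.ofReal ((1 + ‖η‖) ^ (-p)) := by fun_prop
  have hw' : Measurable fun η : EuclideanSpace ℝ (Fin d) =>
      ENNReal.ofReal ((1 + ‖η‖) ^ p) * G η := by fun_prop
  have h := ENNReal.lintegral_mul_le_Lp_mul_Lq volume h22 hw.aemeasurable hw'.aemeasurable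
  have e1 : ∀ η : EuclideanSpace ℝ (Fin d),
      ENNReal.ofReal ((1 + ‖η‖) ^ (-p)) * (ENNReal.ofReal ((1 + ‖η‖) ^ p) * G η) = G η := by
    intro η
    have h1 : (0:ℝ) < 1 + ‖η‖ := by positivity
    rw [← mul_assoc, ← ENNReal.ofReal_mul (by positivity), ← Real.rpow_add h1]
    norm_num
  have e2 : ∀ η : EuclideanSpace ℝ (Fin d),
      (ENNReal.ofReal ((1 + ‖η‖) ^ (-p))) ^ (2:ℝ) = ENNReal.ofReal ((1 + ‖η‖) ^ (-(2*p))) := by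
    intro η
    have h1 : (0:ℝ) ≤ 1 + ‖η‖ := by positivity
    rw [ENNReal.ofReal_rpow_of_nonneg (show (0:ℝ) ≤ (1 + ‖η‖) ^ (-p) by positivity)
      (by norm_num : (0:ℝ) ≤ 2), ← Real.rpow_mul h1]
    congr 1; ring
  calc ∫⁻ η, G η
      = ∫⁻ η, ENNReal.ofReal ((1 + ‖η‖) ^ (-p)) * (ENNReal.ofReal ((1 + ‖η‖) ^ p) * G η) := by
        simp_rw [e1]
    _ ≤ _ := h
    _ = _ := by
        congr 1
        · congr 1; apply lintegral_congr; exact e2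
        · congr 1; apply lintegral_congr; intro η; rw [ENNReal.rpow_two]

lemma gevrey_sqrt_add_le (x y : ℝ≥0∞) :
    (x + y) ^ ((1:ℝ)/2) ≤ x ^ ((1:ℝ)/2) + y ^ ((1:ℝ)/2) := by
  have ex : ∀ z : ℝ≥0∞, (z ^ ((1:ℝ)/2)) ^ (2:ℝ) = z := fun z => by
    rw [← ENNReal.rpow_mul]; norm_num
  have h := ENNReal.add_rpow_le_rpow_add (x ^ ((1:ℝ)/2)) (y ^ ((1:ℝ)/2))
    (by norm_num : (1:ℝ) ≤ 2)
  rw [ex, ex] at h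
  calc (x + y) ^ ((1:ℝ)/2)
      ≤ ((x ^ ((1:ℝ)/2) + y ^ ((1:ℝ)/2)) ^ (2:ℝ)) ^ ((1:ℝ)/2) :=
        ENNReal.rpow_le_rpow h (by norm_num)
    _ = _ := by rw [← ENNReal.rpow_mul]; norm_num

lemma gevrey_add_sq_le (a b : ℝ≥0∞) : (a + b) ^ 2 ≤ 2 * (a ^ 2 + b ^ 2) := by
  have h := ENNReal.rpow_add_le_mul_rpow_add_rpow a b (by norm_num : (1:ℝ) ≤ 2)
  simp only [ENNReal.rpow_two] at h
  calc (a + b) ^ 2 ≤ (2:ℝ≥0∞) ^ ((2:ℝ) - 1) * (a ^ 2 + b ^ 2) := h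
    _ = 2 * (a ^ 2 + b ^ 2) := by norm_num

lemma gevrey_exp_sq (t : ℝ) :
    (ENNReal.ofReal (Real.exp t)) ^ 2 = ENNReal.ofReal (Real.exp (2 * t)) := by
  rw [sq, ← ENNReal.ofReal_mul (Real.exp_nonneg t), ← Real.exp_add]
  ring_nf

lemma gevrey_sq_sqrt (x : ℝ≥0∞) : (x ^ 2) ^ ((1:ℝ)/2) = x := by
  rw [← ENNReal.rpow_two, ← ENNReal.rpow_mul]; norm_num

lemma gevrey_conv_comm {d : ℕ} {F G : EuclideanSpace ℝ (Fin d) → ℝ≥0∞}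
    (hF : Measurable F) (hG : Measurable G) (ξ : EuclideanSpace ℝ (Fin d)) :
    ∫⁻ η, F (ξ - η) * G η = ∫⁻ η, G (ξ - η) * F η := by
  have h := (Measure.measurePreserving_sub_left (volume : Measure (EuclideanSpace ℝ (Fin d)))
    ξ).lintegral_comp (f := fun y => F y * G (ξ - y))
    (hF.mul (hG.comp (measurable_const.sub measurable_id)))
  calc ∫⁻ η, F (ξ - η) * G η
      = ∫⁻ x, F (ξ - x) * G (ξ - (ξ - x)) := by simp [sub_sub_cancel]
    _ = ∫⁻ y, F y * G (ξ - y) := h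
    _ = ∫⁻ η, G (ξ - η) * F η := by simp_rw [mul_comm]

end GevreyAux

/-- The Gevrey `G^{λ;s}` norm on `ℝᵈ`, defined via the Fourier transform with the
weight `e^{2λ|ξ|^s}`, with an additional polynomial weight `(1+|ξ|)^{2p}` recording
`p` extra derivatives (`p = 0` gives the plain Gevrey norm `G^{λ;s}`). -/
noncomputable def gevreyNorm (d : ℕ) (lam s p : ℝ)
    (f : EuclideanSpace ℝ (Fin d) → ℂ) : ℝ≥0∞ :=
  (∫⁻ ξ : EuclideanSpace ℝ (Fin d),
      ‖𝓕 f ξ‖₊ ^ 2 *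
        ENNReal.ofReal ((1 + ‖ξ‖) ^ (2*p) * Real.exp (2 * lam * ‖ξ‖ ^ s))) ^ ((1:ℝ)/2)

/-- The Gevrey product rule: for `s ∈ (1/2, 1)`, `λ > 0`, `p > d/2`, there are
`c = c(s) ∈ (0,1)` and a finite constant `C = C(s,p)` such that
`‖fg‖_{G^{λ;s}} ≤ C (‖f‖_{G^{λ;s}} ‖⟨∇⟩^p g‖_{G^{cλ;s}} + ‖g‖_{G^{λ;s}} ‖⟨∇⟩^p f‖_{G^{cλ;s}})`.
In each term only one factor carries the full Gevrey radius `λ`; the other carries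
the strictly smaller radius `cλ` with `c < 1`. -/
lemma gevrey_norm_p_eq (d : ℕ) (mu s p : ℝ) (h : EuclideanSpace ℝ (Fin d) → ℂ) :
    gevreyNorm d mu s p h = (∫⁻ ξ : EuclideanSpace ℝ (Fin d),
      (ENNReal.ofReal ((1 + ‖ξ‖) ^ p) *
        ((‖𝓕 h ξ‖₊ : ℝ≥0∞) * ENNReal.ofReal (Real.exp (mu * ‖ξ‖ ^ s)))) ^ 2) ^ ((1:ℝ)/2) := by
  unfold gevreyNorm
  congr 1
  apply lintegral_congr
  intro ξ
  have hx : (0:ℝ) < 1 + ‖ξ‖ := by positivity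
  have h1 : (ENNReal.ofReal ((1 + ‖ξ‖) ^ p)) ^ 2 = ENNReal.ofReal ((1 + ‖ξ‖) ^ (2*p)) := by
    rw [sq, ← ENNReal.ofReal_mul (by positivity), ← Real.rpow_add hx]
    congr 1
    ring
  rw [mul_pow, mul_pow, gevrey_exp_sq, h1, ENNReal.ofReal_mul (by positivity)]
  ring_nf

lemma gevrey_norm_zero_eq (d : ℕ) (mu s : ℝ) (h : EuclideanSpace ℝ (Fin d) → ℂ) :
    gevreyNorm d mu s 0 h = (∫⁻ ξ : EuclideanSpace ℝ (Fin d),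
      ((‖𝓕 h ξ‖₊ : ℝ≥0∞) * ENNReal.ofReal (Real.exp (mu * ‖ξ‖ ^ s))) ^ 2) ^ ((1:ℝ)/2) := by
  rw [gevrey_norm_p_eq]
  congr 1
  apply lintegral_congr
  intro ξ
  rw [Real.rpow_zero]
  simp

theorem stmt_18 (d : ℕ) (s : ℝ) (hs : s ∈ Set.Ioo (1/2 : ℝ) 1)
    (lam : ℝ) (hlam : 0 < lam) (p : ℝ) (hp : (d:ℝ)/2 < p) :
    ∃ c ∈ Set.Ioo (0:ℝ) 1, ∃ C : ℝ≥0∞, C ≠ ⊤ ∧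
      ∀ f g : 𝓢(EuclideanSpace ℝ (Fin d), ℂ),
        gevreyNorm d lam s 0 (fun x => f x * g x)
          ≤ C * (gevreyNorm d lam s 0 (⇑f) * gevreyNorm d (c * lam) s p (⇑g)
              + gevreyNorm d lam s 0 (⇑g) * gevreyNorm d (c * lam) s p (⇑f)) := by
  obtain ⟨hs0, hs1⟩ := hs
  have hs0' : (0:ℝ) < s := by linarith
  set K2 : ℝ≥0∞ := ∫⁻ η : EuclideanSpace ℝ (Fin d),
      ENNReal.ofReal ((1 + ‖η‖) ^ (-(2*p))) with hK2def
  have hK2 : K2 ≠ ⊤ := by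
    have hint : Integrable (fun η : EuclideanSpace ℝ (Fin d) => (1 + ‖η‖) ^ (-(2*p))) :=
      integrable_one_add_norm (by simpa [finrank_euclideanSpace_fin] using by linarith :
        (Module.finrank ℝ (EuclideanSpace ℝ (Fin d)) : ℝ) < 2*p)
    refine ne_top_of_le_ne_top (ne_of_lt hint.2) (lintegral_mono fun η => ?_)
    exact Real.ofReal_le_enorm _
  set K : ℝ≥0∞ := K2 ^ ((1:ℝ)/2) with hKdef
  have hK : K ≠ ⊤ := ENNReal.rpow_ne_top_of_nonneg (by norm_num) hK2
  refine ⟨s, ⟨hs0', hs1⟩, (2:ℝ≥0∞) ^ ((1:ℝ)/2) * K, ?_, ?_⟩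
  · exact ENNReal.mul_ne_top (ENNReal.rpow_ne_top_of_nonneg (by norm_num) (by norm_num)) hK
  intro f g
  -- weighted Fourier profiles
  set F : EuclideanSpace ℝ (Fin d) → ℝ≥0∞ := fun ξ =>
    (‖𝓕 (⇑f) ξ‖₊ : ℝ≥0∞) * ENNReal.ofReal (Real.exp (lam * ‖ξ‖ ^ s)) with hFdef
  set Fc : EuclideanSpace ℝ (Fin d) → ℝ≥0∞ := fun ξ =>
    (‖𝓕 (⇑f) ξ‖₊ : ℝ≥0∞) * ENNReal.ofReal (Real.exp (s * lam * ‖ξ‖ ^ s)) with hFcdef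
  set G : EuclideanSpace ℝ (Fin d) → ℝ≥0∞ := fun ξ =>
    (‖𝓕 (⇑g) ξ‖₊ : ℝ≥0∞) * ENNReal.ofReal (Real.exp (lam * ‖ξ‖ ^ s)) with hGdef
  set Gc : EuclideanSpace ℝ (Fin d) → ℝ≥0∞ := fun ξ =>
    (‖𝓕 (⇑g) ξ‖₊ : ℝ≥0∞) * ENNReal.ofReal (Real.exp (s * lam * ‖ξ‖ ^ s)) with hGcdef
  have hfC : Continuous (𝓕 ⇑f) := (𝓕 f).continuous
  have hgC : Continuous (𝓕 ⇑g) := (𝓕 g).continuous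
  have hFm : Measurable F := by fun_prop
  have hFcm : Measurable Fc := by fun_prop
  have hGm : Measurable G := by fun_prop
  have hGcm : Measurable Gc := by fun_prop
  -- the exponential triangle-type inequality
  have hexp : ∀ ξ η : EuclideanSpace ℝ (Fin d), ‖η‖ ≤ ‖ξ - η‖ →
      Real.exp (lam * ‖ξ‖ ^ s)
        ≤ Real.exp (lam * ‖ξ - η‖ ^ s) * Real.exp (s * lam * ‖η‖ ^ s) := by
    intro ξ η hle
    rw [← Real.exp_add]
    apply Real.exp_le_exp.2
    have htri : ‖ξ‖ ≤ ‖ξ - η‖ + ‖η‖ := by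
      calc ‖ξ‖ = ‖(ξ - η) + η‖ := by rw [sub_add_cancel]
        _ ≤ ‖ξ - η‖ + ‖η‖ := norm_add_le _ _
    have h1 : ‖ξ‖ ^ s ≤ (‖ξ - η‖ + ‖η‖) ^ s :=
      Real.rpow_le_rpow (norm_nonneg _) htri (le_of_lt hs0')
    have h2 : (‖ξ - η‖ + ‖η‖) ^ s ≤ ‖ξ - η‖ ^ s + s * ‖η‖ ^ s :=
      gevrey_rpow_add_le hs0' (le_of_lt hs1) (norm_nonneg _) hle
    nlinarith [Real.rpow_nonneg (norm_nonneg η) s, Real.rpow_nonneg (norm_nonneg (ξ - η)) s]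
  -- pointwise bound on the weighted Fourier transform of the product
  have hpt : ∀ ξ : EuclideanSpace ℝ (Fin d),
      (‖𝓕 (fun x => f x * g x) ξ‖₊ : ℝ≥0∞) * ENNReal.ofReal (Real.exp (lam * ‖ξ‖ ^ s))
        ≤ (∫⁻ η, F (ξ - η) * Gc η) + ∫⁻ η, Fc (ξ - η) * G η := by
    intro ξ
    rw [gevrey_fourier_mul f g ξ]
    have step1 : (‖∫ η, 𝓕 (⇑f) (ξ - η) * 𝓕 (⇑g) η‖₊ : ℝ≥0∞)
          * ENNReal.ofReal (Real.exp (lam * ‖ξ‖ ^ s))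
        ≤ ∫⁻ η, ((‖𝓕 (⇑f) (ξ - η)‖₊ * ‖𝓕 (⇑g) η‖₊ : ℝ≥0∞)
          * ENNReal.ofReal (Real.exp (lam * ‖ξ‖ ^ s))) := by
      rw [lintegral_mul_const' _ _ ENNReal.ofReal_ne_top]
      apply mul_le_mul_left
      calc (‖∫ η, 𝓕 (⇑f) (ξ - η) * 𝓕 (⇑g) η‖₊ : ℝ≥0∞)
          ≤ ∫⁻ η, (‖𝓕 (⇑f) (ξ - η) * 𝓕 (⇑g) η‖₊ : ℝ≥0∞) :=
            enorm_integral_le_lintegral_enorm _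
        _ = ∫⁻ η, (‖𝓕 (⇑f) (ξ - η)‖₊ * ‖𝓕 (⇑g) η‖₊ : ℝ≥0∞) := by
            apply lintegral_congr; intro η
            rw [nnnorm_mul]; push_cast; ring
    refine le_trans step1 (le_trans (lintegral_mono fun η => ?_) (lintegral_add_left
      (by fun_prop) _).le)
    rcases le_total ‖η‖ ‖ξ - η‖ with hle | hle
    · -- f carries the full radius
      refine le_trans ?_ (le_self_add)
      calc (‖𝓕 (⇑f) (ξ - η)‖₊ * ‖𝓕 (⇑g) η‖₊ : ℝ≥0∞)
            * ENNReal.ofReal (Real.exp (lam * ‖ξ‖ ^ s))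
          ≤ (‖𝓕 (⇑f) (ξ - η)‖₊ * ‖𝓕 (⇑g) η‖₊ : ℝ≥0∞)
            * ENNReal.ofReal (Real.exp (lam * ‖ξ - η‖ ^ s) * Real.exp (s * lam * ‖η‖ ^ s)) :=
            mul_le_mul_right (ENNReal.ofReal_le_ofReal (hexp ξ η hle)) _
        _ = F (ξ - η) * Gc η := by
            rw [ENNReal.ofReal_mul (Real.exp_nonneg _), hFdef, hGcdef]
            push_cast; ring
    · -- g carries the full radius
      refine le_trans ?_ (le_add_self)
      have hexp' : Real.exp (lam * ‖ξ‖ ^ s)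
          ≤ Real.exp (lam * ‖η‖ ^ s) * Real.exp (s * lam * ‖ξ - η‖ ^ s) := by
        rw [← Real.exp_add]
        apply Real.exp_le_exp.2
        have htri : ‖ξ‖ ≤ ‖η‖ + ‖ξ - η‖ := by
          calc ‖ξ‖ = ‖η + (ξ - η)‖ := by rw [add_sub_cancel]
            _ ≤ ‖η‖ + ‖ξ - η‖ := norm_add_le _ _
        have h1 : ‖ξ‖ ^ s ≤ (‖η‖ + ‖ξ - η‖) ^ s :=
          Real.rpow_le_rpow (norm_nonneg _) htri (le_of_lt hs0')
        have h2 : (‖η‖ + ‖ξ - η‖) ^ s ≤ ‖η‖ ^ s + s * ‖ξ - η‖ ^ s :=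
          gevrey_rpow_add_le hs0' (le_of_lt hs1) (norm_nonneg _) hle
        nlinarith [Real.rpow_nonneg (norm_nonneg η) s,
          Real.rpow_nonneg (norm_nonneg (ξ - η)) s]
      calc (‖𝓕 (⇑f) (ξ - η)‖₊ * ‖𝓕 (⇑g) η‖₊ : ℝ≥0∞)
            * ENNReal.ofReal (Real.exp (lam * ‖ξ‖ ^ s))
          ≤ (‖𝓕 (⇑f) (ξ - η)‖₊ * ‖𝓕 (⇑g) η‖₊ : ℝ≥0∞)
            * ENNReal.ofReal (Real.exp (lam * ‖η‖ ^ s) * Real.exp (s * lam * ‖ξ - η‖ ^ s)) :=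
            mul_le_mul_right (ENNReal.ofReal_le_ofReal hexp') _
        _ = Fc (ξ - η) * G η := by
            rw [ENNReal.ofReal_mul (Real.exp_nonneg _), hFcdef, hGdef]
            push_cast; ring
    -- the two convolution profiles
  set conv1 : EuclideanSpace ℝ (Fin d) → ℝ≥0∞ := fun ξ => ∫⁻ η, F (ξ - η) * Gc η with hc1
  set conv2 : EuclideanSpace ℝ (Fin d) → ℝ≥0∞ := fun ξ => ∫⁻ η, Fc (ξ - η) * G η with hc2
  have hc1m : Measurable conv1 := by
    apply Measurable.lintegral_prod_right
    exact (hFm.comp (measurable_fst.sub measurable_snd)).mul (hGcm.comp measurable_snd)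
  have hc2m : Measurable conv2 := by
    apply Measurable.lintegral_prod_right
    exact (hFcm.comp (measurable_fst.sub measurable_snd)).mul (hGm.comp measurable_snd)
  -- norms as L² integrals of the profiles
  have hNf : gevreyNorm d lam s 0 (⇑f) = (∫⁻ ξ, F ξ ^ 2) ^ ((1:ℝ)/2) :=
    gevrey_norm_zero_eq d lam s (⇑f)
  have hNg : gevreyNorm d lam s 0 (⇑g) = (∫⁻ ξ, G ξ ^ 2) ^ ((1:ℝ)/2) :=
    gevrey_norm_zero_eq d lam s (⇑g)
  have hMf : gevreyNorm d (s * lam) s p (⇑f)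
      = (∫⁻ η, (ENNReal.ofReal ((1 + ‖η‖) ^ p) * Fc η) ^ 2) ^ ((1:ℝ)/2) :=
    gevrey_norm_p_eq d (s * lam) s p (⇑f)
  have hMg : gevreyNorm d (s * lam) s p (⇑g)
      = (∫⁻ η, (ENNReal.ofReal ((1 + ‖η‖) ^ p) * Gc η) ^ 2) ^ ((1:ℝ)/2) :=
    gevrey_norm_p_eq d (s * lam) s p (⇑g)
  -- L¹ bounds for the small-radius profiles
  have hL1g : (∫⁻ η, Gc η) ≤ K * gevreyNorm d (s * lam) s p (⇑g) := by
    rw [hMg, hKdef, hK2def]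
    exact gevrey_l1 hGcm p
  have hL1f : (∫⁻ η, Fc η) ≤ K * gevreyNorm d (s * lam) s p (⇑f) := by
    rw [hMf, hKdef, hK2def]
    exact gevrey_l1 hFcm p
  -- Young bounds
  have hY1 : (∫⁻ ξ, conv1 ξ ^ 2) ^ ((1:ℝ)/2)
      ≤ (K * gevreyNorm d (s * lam) s p (⇑g)) * gevreyNorm d lam s 0 (⇑f) := by
    calc (∫⁻ ξ, conv1 ξ ^ 2) ^ ((1:ℝ)/2)
        ≤ ((∫⁻ η, Gc η) ^ 2 * ∫⁻ ξ, F ξ ^ 2) ^ ((1:ℝ)/2) :=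
          ENNReal.rpow_le_rpow (gevrey_young hFm hGcm) (by norm_num)
      _ = (∫⁻ η, Gc η) * (∫⁻ ξ, F ξ ^ 2) ^ ((1:ℝ)/2) := by
          rw [ENNReal.mul_rpow_of_nonneg _ _ (by norm_num : (0:ℝ) ≤ 1/2), gevrey_sq_sqrt]
      _ ≤ (K * gevreyNorm d (s * lam) s p (⇑g)) * gevreyNorm d lam s 0 (⇑f) := by
          rw [hNf]
          exact mul_le_mul' hL1g le_rfl
  have hY2 : (∫⁻ ξ, conv2 ξ ^ 2) ^ ((1:ℝ)/2)
      ≤ (K * gevreyNorm d (s * lam) s p (⇑f)) * gevreyNorm d lam s 0 (⇑g) := by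
    calc (∫⁻ ξ, conv2 ξ ^ 2) ^ ((1:ℝ)/2)
        = (∫⁻ ξ, (∫⁻ η, G (ξ - η) * Fc η) ^ 2) ^ ((1:ℝ)/2) := by
          congr 1
          apply lintegral_congr
          intro ξ
          congr 1
          exact gevrey_conv_comm hFcm hGm ξ
      _ ≤ ((∫⁻ η, Fc η) ^ 2 * ∫⁻ ξ, G ξ ^ 2) ^ ((1:ℝ)/2) :=
          ENNReal.rpow_le_rpow (gevrey_young hGm hFcm) (by norm_num)
      _ = (∫⁻ η, Fc η) * (∫⁻ ξ, G ξ ^ 2) ^ ((1:ℝ)/2) := by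
          rw [ENNReal.mul_rpow_of_nonneg _ _ (by norm_num : (0:ℝ) ≤ 1/2), gevrey_sq_sqrt]
      _ ≤ (K * gevreyNorm d (s * lam) s p (⇑f)) * gevreyNorm d lam s 0 (⇑g) := by
          rw [hNg]
          exact mul_le_mul' hL1f le_rfl
  -- main chain
  calc gevreyNorm d lam s 0 (fun x => f x * g x)
      = (∫⁻ ξ, ((‖𝓕 (fun x => f x * g x) ξ‖₊ : ℝ≥0∞)
          * ENNReal.ofReal (Real.exp (lam * ‖ξ‖ ^ s))) ^ 2) ^ ((1:ℝ)/2) :=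
        gevrey_norm_zero_eq d lam s _
    _ ≤ (∫⁻ ξ, (conv1 ξ + conv2 ξ) ^ 2) ^ ((1:ℝ)/2) := by
        refine ENNReal.rpow_le_rpow (lintegral_mono fun ξ => ?_) (by norm_num)
        exact pow_le_pow_left₀ (by positivity) (hpt ξ) 2
    _ ≤ (∫⁻ ξ, 2 * (conv1 ξ ^ 2 + conv2 ξ ^ 2)) ^ ((1:ℝ)/2) :=
        ENNReal.rpow_le_rpow (lintegral_mono fun ξ => gevrey_add_sq_le _ _) (by norm_num)
    _ = (2 * (∫⁻ ξ, conv1 ξ ^ 2) + 2 * (∫⁻ ξ, conv2 ξ ^ 2)) ^ ((1:ℝ)/2) := by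
        rw [lintegral_const_mul' _ _ ENNReal.ofNat_ne_top,
          lintegral_add_left (hc1m.pow_const 2), mul_add]
    _ ≤ (2 * ∫⁻ ξ, conv1 ξ ^ 2) ^ ((1:ℝ)/2) + (2 * ∫⁻ ξ, conv2 ξ ^ 2) ^ ((1:ℝ)/2) :=
        gevrey_sqrt_add_le _ _
    _ = (2:ℝ≥0∞) ^ ((1:ℝ)/2) * (∫⁻ ξ, conv1 ξ ^ 2) ^ ((1:ℝ)/2)
        + (2:ℝ≥0∞) ^ ((1:ℝ)/2) * (∫⁻ ξ, conv2 ξ ^ 2) ^ ((1:ℝ)/2) := by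
        rw [ENNReal.mul_rpow_of_nonneg _ _ (by norm_num : (0:ℝ) ≤ 1/2),
          ENNReal.mul_rpow_of_nonneg _ _ (by norm_num : (0:ℝ) ≤ 1/2)]
    _ ≤ (2:ℝ≥0∞) ^ ((1:ℝ)/2) * ((K * gevreyNorm d (s * lam) s p (⇑g)) * gevreyNorm d lam s 0 (⇑f))
        + (2:ℝ≥0∞) ^ ((1:ℝ)/2) * ((K * gevreyNorm d (s * lam) s p (⇑f)) * gevreyNorm d lam s 0 (⇑g)) := by
        exact add_le_add (mul_le_mul_right hY1 _) (mul_le_mul_right hY2 _)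
    _ = (2:ℝ≥0∞) ^ ((1:ℝ)/2) * K * (gevreyNorm d lam s 0 (⇑f) * gevreyNorm d (s * lam) s p (⇑g)
        + gevreyNorm d lam s 0 (⇑g) * gevreyNorm d (s * lam) s p (⇑f)) := by
        ring
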